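/- For every t ∈ ℝ and every x ∈ X_or, the vector (Matrix.exp ℝ (t • A)).mulVec x belongs to X_or; that is, the flow of the uncontrolled linear dynamics ẋ = Ax preserves the group-consensus subspace. -/

import Mathlib

open Matrix

/-- The `N × N` permutation matrix of a permutation `σ` of `Fin N`, with the convention
`(permMat N σ).mulVec x i = x (σ⁻¹ i)`. -/
def permMat (N : ℕ) (σ : Equiv.Perm (Fin N)) : Matrix (Fin N) (Fin N) ℝ :=
  Matrix.of fun i j => if σ j = i then (1 : ℝ) else 0

/-- The group-consensus subspace: vectors that are constant on each orbit of the natural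
action of the subgroup `G` of permutations of `Fin N`. -/
def consensusSet (N : ℕ) (G : Subgroup (Equiv.Perm (Fin N))) : Set (Fin N → ℝ) :=
  {x | ∀ i j : Fin N, (∃ σ ∈ G, σ i = j) → x i = x j}

lemma permMat_mulVec (N : ℕ) (σ : Equiv.Perm (Fin N)) (x : Fin N → ℝ) (i : Fin N) :
    (permMat N σ).mulVec x i = x (σ⁻¹ i) := by
  simp only [permMat, mulVec, dotProduct, Matrix.of_apply]
  rw [Finset.sum_eq_single (σ⁻¹ i)]
  · simp
  · intro j _ hj
    rw [if_neg, zero_mul]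
    intro h; exact hj (by simp [← h])
  · simp

lemma mem_consensus_iff (N : ℕ) (G : Subgroup (Equiv.Perm (Fin N))) (x : Fin N → ℝ) :
    x ∈ consensusSet N G ↔ ∀ σ ∈ G, (permMat N σ).mulVec x = x := by
  constructor
  · intro hx σ hσ
    funext i
    rw [permMat_mulVec]
    exact hx (σ⁻¹ i) i ⟨σ, hσ, by simp⟩
  · intro h i j ⟨σ, hσ, hij⟩
    have := congrFun (h σ⁻¹ (inv_mem hσ)) i
    rw [permMat_mulVec] at this
    simp [← hij] at this ⊢
    rw [← this]

/-- The flow of the uncontrolled linear dynamics `ẋ = Ax` preserves the group-consensus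
subspace: for every `t` and every `x ∈ X_or`, `(exp (t • A)).mulVec x ∈ X_or`. -/
theorem matrix_exp_preserves_consensus (N : ℕ) (A : Matrix (Fin N) (Fin N) ℝ)
    (G : Subgroup (Equiv.Perm (Fin N)))
    (hA : ∀ σ ∈ G, permMat N σ * A = A * permMat N σ) :
    ∀ (t : ℝ), ∀ x ∈ consensusSet N G,
      (NormedSpace.exp (t • A)).mulVec x ∈ consensusSet N G := by
  intro t x hx
  rw [mem_consensus_iff] at hx ⊢
  intro σ hσ
  have hc : Commute (t • A) (permMat N σ) :=
    (Commute.smul_left ((hA σ hσ).symm) t)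
  have hce : Commute (NormedSpace.exp (t • A)) (permMat N σ) := hc.exp_left
  rw [mulVec_mulVec, ← hce.eq, ← mulVec_mulVec, hx σ hσ]
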